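/- Let q be a positive integer with q ≡ 0 (mod 4). Then the quadratic Gauss sum G(1;q) = ∑_{b=0}^{q-1} e^{2πi b²/q} equals (1+i)√q. -/

import Mathlib

open Complex

open Real Filter Topology HurwitzZeta

noncomputable section

namespace GaussSumAux


def resEquiv (q : ℕ) (hq : 0 < q) : Fin q × ℤ ≃ ℤ where
  toFun p := q * p.2 + (p.1 : ℤ)
  invFun n := (⟨(n % q).toNat, by
      have h1 : 0 ≤ n % (q : ℤ) := Int.emod_nonneg n (by exact_mod_cast hq.ne')
      have h2 : n % (q : ℤ) < q := Int.emod_lt_of_pos n (by exact_mod_cast hq)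
      omega⟩, n / q)
  left_inv := by
    rintro ⟨b, k⟩
    have hb0 : (0:ℤ) ≤ (b:ℤ) := Int.ofNat_nonneg _
    have hbq : (b:ℤ) < q := by exact_mod_cast b.2
    have hqz : (q:ℤ) ≠ 0 := by exact_mod_cast hq.ne'
    have hmod : ((q:ℤ) * k + b) % q = b := by
      rw [add_comm, Int.add_mul_emod_self_left, Int.emod_eq_of_lt hb0 hbq]
    have hdiv : ((q:ℤ) * k + b) / q = k := by
      rw [add_comm, Int.add_mul_ediv_left _ _ hqz, Int.ediv_eq_zero_of_lt hb0 hbq, zero_add]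
    ext
    · simp [hmod]
    · simp [hdiv]
  right_inv := by
    intro n
    have h1 : 0 ≤ n % (q : ℤ) := Int.emod_nonneg n (by exact_mod_cast hq.ne')
    simp only [Int.toNat_of_nonneg h1]
    exact Int.mul_ediv_add_emod n q

lemma term_eq (q : ℕ) (hq : 0 < q) (t : ℝ) (b : ℕ) (k : ℤ) :
    jacobiTheta₂_term ((q : ℤ) * k + (b : ℤ)) 0 (2 / q + I * t)
      = Complex.exp (2 * π * I * (b : ℂ) ^ 2 / q)
        * ((rexp (-π * ((k : ℝ) + (b : ℝ) / (q : ℝ)) ^ 2 * ((q : ℝ) ^ 2 * t)) : ℝ) : ℂ) := by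
  have hq' : (q : ℂ) ≠ 0 := Nat.cast_ne_zero.mpr hq.ne'
  rw [jacobiTheta₂_term, ofReal_exp, ← Complex.exp_add]
  rw [Complex.exp_eq_exp_iff_exists_int]
  refine ⟨q * k ^ 2 + 2 * k * b, ?_⟩
  push_cast
  field_simp
  linear_combination ((t:ℂ) * (q:ℂ) * ((b:ℂ)+(q:ℂ)*(k:ℂ))^2) * Complex.I_sq

lemma theta_split (q : ℕ) (hq : 0 < q) {t : ℝ} (ht : 0 < t) :
    jacobiTheta₂ 0 (2 / q + I * t)
      = ∑ b ∈ Finset.range q,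
          Complex.exp (2 * π * I * (b : ℂ) ^ 2 / q)
            * ((evenKernel (((b : ℝ) / (q : ℝ) : ℝ) : UnitAddCircle) ((q : ℝ) ^ 2 * t) : ℝ) : ℂ) := by
  set g : ℕ → ℂ := fun n => Complex.exp (2 * π * I * (n : ℂ) ^ 2 / q)
    * ((evenKernel (((n : ℝ) / (q : ℝ) : ℝ) : UnitAddCircle) ((q : ℝ) ^ 2 * t) : ℝ) : ℂ) with hg
  have hτ : (0 : ℝ) < (2 / (q : ℂ) + I * t).im := by simp [ht]
  have h1 := hasSum_jacobiTheta₂_term 0 hτ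
  have h2 := (Equiv.hasSum_iff (resEquiv q hq)).mpr h1
  have ht2 : (0 : ℝ) < (q : ℝ) ^ 2 * t := by positivity
  have hfib : ∀ b : Fin q,
      HasSum (fun k : ℤ => jacobiTheta₂_term (resEquiv q hq (b, k)) 0 (2 / q + I * t))
        (g (b : ℕ)) := by
    intro b
    have h3 := (hasSum_ofReal.mpr (hasSum_int_evenKernel ((b : ℝ) / (q : ℝ)) ht2)).mul_left
      (Complex.exp (2 * π * I * ((b : ℕ) : ℂ) ^ 2 / q))
    rw [hg]
    rw [show (fun k : ℤ => jacobiTheta₂_term (resEquiv q hq (b, k)) 0 (2 / q + I * t)) = fun k : ℤ => _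
      from funext fun k => term_eq q hq t b k]
    exact h3
  have h4 := HasSum.prod_fiberwise h2 hfib
  rw [← (hasSum_fintype (fun b : Fin q => g (b : ℕ))).unique h4]
  exact Fin.sum_univ_eq_sum_range g q

lemma cosKernel_tendsto (a : UnitAddCircle) :
    Tendsto (fun x : ℝ => cosKernel a x) atTop (𝓝 1) := by
  obtain ⟨p, hp, hO⟩ := isBigO_atTop_cosKernel_sub a
  have h0 : Tendsto (fun x : ℝ => Real.exp (-p * x)) atTop (𝓝 0) := by
    simpa only [neg_mul, Real.tendsto_exp_comp_nhds_zero, tendsto_neg_atBot_iff, id_eq]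
      using tendsto_id.const_mul_atTop hp
  have h1 := hO.trans_tendsto h0
  simpa using h1.add_const 1

lemma evenKernel_tendsto :
    Tendsto (fun x : ℝ => evenKernel 0 x) atTop (𝓝 1) := by
  obtain ⟨p, hp, hO⟩ := isBigO_atTop_evenKernel_sub 0
  have h0 : Tendsto (fun x : ℝ => Real.exp (-p * x)) atTop (𝓝 0) := by
    simpa only [neg_mul, Real.tendsto_exp_comp_nhds_zero, tendsto_neg_atBot_iff, id_eq]
      using tendsto_id.const_mul_atTop hp
  simp only [if_pos rfl] at hO
  have h1 := hO.trans_tendsto h0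
  simpa using h1.add_const 1

lemma rate_tendsto (q : ℕ) (hq : 0 < q) :
    Tendsto (fun t : ℝ => ((q : ℝ) ^ 2 * t)⁻¹) (𝓝[>] (0:ℝ)) atTop := by
  have h1 : Tendsto (fun t : ℝ => ((q:ℝ)^2)⁻¹ * t⁻¹) (𝓝[>] (0:ℝ)) atTop :=
    tendsto_inv_nhdsGT_zero.const_mul_atTop (by positivity)
  exact h1.congr (fun t => by rw [mul_inv])

lemma way1 (q : ℕ) (hq : 0 < q) :
    Tendsto (fun t : ℝ => ((Real.sqrt t : ℝ) : ℂ) * jacobiTheta₂ 0 (2 / q + I * t))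
      (𝓝[>] (0:ℝ))
      (𝓝 ((∑ b ∈ Finset.range q, Complex.exp (2 * π * I * (b : ℂ) ^ 2 / q)) * ((1 / q : ℝ) : ℂ))) := by
  have key : ∀ b : ℕ, Tendsto
      (fun t : ℝ => ((Real.sqrt t * evenKernel (((b : ℝ) / (q : ℝ) : ℝ) : UnitAddCircle) ((q : ℝ) ^ 2 * t) : ℝ) : ℂ))
      (𝓝[>] (0:ℝ)) (𝓝 ((1 / q : ℝ) : ℂ)) := by
    intro b
    have hreal : Tendsto
        (fun t : ℝ => Real.sqrt t * evenKernel (((b : ℝ) / (q : ℝ) : ℝ) : UnitAddCircle) ((q : ℝ) ^ 2 * t))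
        (𝓝[>] (0:ℝ)) (𝓝 (1 / q)) := by
      have hc : Tendsto
          (fun t : ℝ => (1 / q : ℝ) * cosKernel (((b : ℝ) / (q : ℝ) : ℝ) : UnitAddCircle) (((q:ℝ)^2*t)⁻¹))
          (𝓝[>] (0:ℝ)) (𝓝 ((1/q : ℝ) * 1)) :=
        (((cosKernel_tendsto _).comp (rate_tendsto q hq)).const_mul _)
      rw [mul_one] at hc
      refine hc.congr' ?_
      filter_upwards [self_mem_nhdsWithin] with t ht
      have ht : (0:ℝ) < t := ht
      have hq2t : (0:ℝ) < (q:ℝ)^2 * t := by positivity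
      rw [evenKernel_functional_equation]
      have hpow : ((q:ℝ)^2*t) ^ (1/2 : ℝ) = q * Real.sqrt t := by
        rw [← Real.sqrt_eq_rpow, Real.sqrt_mul (by positivity), Real.sqrt_sq (by positivity)]
      rw [hpow, one_div ((q:ℝ)^2*t)]
      have hst : Real.sqrt t ≠ 0 := by positivity
      have hqr : (q:ℝ) ≠ 0 := by positivity
      field_simp
    have := (Complex.continuous_ofReal.tendsto _).comp hreal
    simpa [Function.comp_def, ofReal_mul] using this
  have hsum : Tendsto
      (fun t : ℝ => ∑ b ∈ Finset.range q, Complex.exp (2 * π * I * (b : ℂ) ^ 2 / q)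
        * ((Real.sqrt t * evenKernel (((b : ℝ) / (q : ℝ) : ℝ) : UnitAddCircle) ((q : ℝ) ^ 2 * t) : ℝ) : ℂ))
      (𝓝[>] (0:ℝ))
      (𝓝 (∑ b ∈ Finset.range q, Complex.exp (2 * π * I * (b : ℂ) ^ 2 / q) * ((1 / q : ℝ) : ℂ))) := by
    refine tendsto_finset_sum _ fun b _ => ((key b).const_mul _)
  rw [← Finset.sum_mul] at hsum
  refine Tendsto.congr' ?_ hsum
  filter_upwards [self_mem_nhdsWithin] with t ht
  have ht : (0:ℝ) < t := ht
  rw [theta_split q hq ht, Finset.mul_sum]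
  refine Finset.sum_congr rfl fun b _ => ?_
  push_cast
  ring


lemma theta_period (z τ : ℂ) (m : ℕ) : jacobiTheta₂ z (τ + 2 * m) = jacobiTheta₂ z τ := by
  induction m with
  | zero => simp
  | succ n ih =>
    have h : τ + 2 * ((n + 1 : ℕ) : ℂ) = (τ + 2 * n) + 2 := by push_cast; ring
    rw [h, jacobiTheta₂_add_right, ih]

lemma theta_sub_one_bound {τ : ℂ} (hτ : 0 < τ.im) :
    ‖jacobiTheta₂ 0 τ - 1‖ ≤ evenKernel 0 τ.im - 1 := by
  have h1 := hasSum_jacobiTheta₂_term 0 hτ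
  have h0 : jacobiTheta₂_term 0 0 τ = 1 := by simp [jacobiTheta₂_term]
  have h1' := h1.update 0 0
  rw [h0] at h1'
  have hv1 : (0:ℂ) - 1 + jacobiTheta₂ 0 τ = jacobiTheta₂ 0 τ - 1 := by ring
  rw [hv1] at h1'
  have h2 := hasSum_int_evenKernel 0 hτ
  have h2' := h2.update 0 0
  have hb : ∀ n : ℤ,
      ‖Function.update (fun n : ℤ => jacobiTheta₂_term n 0 τ) 0 0 n‖
        ≤ Function.update (fun n : ℤ => rexp (-π * ((n:ℝ) + 0) ^ 2 * τ.im)) 0 0 n := by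
    intro n
    rcases eq_or_ne n 0 with rfl | hn
    · simp
    · rw [Function.update_of_ne hn, Function.update_of_ne hn, norm_jacobiTheta₂_term]
      apply le_of_eq
      congr 1
      simp
  have hle := tsum_of_norm_bounded h2' hb
  rw [h1'.tsum_eq] at hle
  have hco : ((0:ℝ) : UnitAddCircle) = 0 := by norm_num
  rw [hco] at hle
  simp only [Int.cast_zero, zero_add, ne_eq, OfNat.ofNat_ne_zero, not_false_eq_true,
    zero_pow, mul_zero, zero_mul, Real.exp_zero] at hle
  linarith [hle]

lemma ofReal_mul_cpow {r : ℝ} (hr : 0 < r) {z : ℂ} (hz : z ≠ 0) (s : ℂ) :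
    ((r : ℂ) * z) ^ s = (r : ℂ) ^ s * z ^ s := by
  have hr' : (r : ℂ) ≠ 0 := ofReal_ne_zero.mpr hr.ne'
  rw [Complex.cpow_def_of_ne_zero (mul_ne_zero hr' hz),
    Complex.cpow_def_of_ne_zero hr', Complex.cpow_def_of_ne_zero hz,
    Complex.log_ofReal_mul hr hz, ← Complex.exp_add, add_mul, Complex.ofReal_log hr.le]




lemma way2 (q : ℕ) (hq : 0 < q) (h4 : q % 4 = 0) :
    Tendsto (fun t : ℝ => ((Real.sqrt t : ℝ) : ℂ) * jacobiTheta₂ 0 (2 / q + I * t))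
      (𝓝[>] (0:ℝ))
      (𝓝 ((1 / ((-2) * I / q) ^ (1/2 : ℂ)) * (1 / ((q:ℂ)^2/4) ^ (1/2 : ℂ)))) := by
  have hq' : (q:ℂ) ≠ 0 := Nat.cast_ne_zero.mpr hq.ne'
  have hqr : (q:ℝ) ≠ 0 := Nat.cast_ne_zero.mpr hq.ne'
  -- base point nonvanishing
  have hbne : ((-2) * I / (q:ℂ)) ≠ 0 := by
    apply div_ne_zero _ hq'
    exact mul_ne_zero (by norm_num) I_ne_zero
  -- A limit
  have hA : Tendsto (fun t : ℝ => 1 / (-I * (2 / (q:ℂ) + I * t)) ^ (1/2 : ℂ)) (𝓝[>] (0:ℝ))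
      (𝓝 (1 / ((-2) * I / (q:ℂ)) ^ (1/2 : ℂ))) := by
    have hbase : Tendsto (fun t : ℝ => -I * (2 / (q:ℂ) + I * (t:ℂ))) (𝓝[>] (0:ℝ))
        (𝓝 ((-2) * I / (q:ℂ))) := by
      have hcont : Continuous (fun t : ℝ => -I * (2 / (q:ℂ) + I * (t:ℂ))) := by continuity
      have h0 : -I * (2 / (q:ℂ) + I * ((0:ℝ):ℂ)) = (-2) * I / (q:ℂ) := by
        push_cast
        ring
      have hct := hcont.continuousAt (x := (0:ℝ))
      rw [ContinuousAt, h0] at hct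
      exact hct.mono_left nhdsWithin_le_nhds
    have hslit : ((-2) * I / (q:ℂ)) ∈ Complex.slitPlane := by
      rw [Complex.mem_slitPlane_iff]
      right
      have : ((-2) * I / (q:ℂ)) = ((-2 / (q:ℝ) : ℝ) : ℂ) * I := by push_cast; field_simp
      rw [this]
      simp [hqr]
    have hcp : ContinuousAt (fun z : ℂ => z ^ (1/2 : ℂ)) ((-2) * I / (q:ℂ)) :=
      continuousAt_cpow_const hslit
    have hne : ((-2) * I / (q:ℂ)) ^ (1/2 : ℂ) ≠ 0 := by
      simp [Complex.cpow_eq_zero_iff, hbne, hq.ne']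
    exact tendsto_const_nhds.div (hcp.tendsto.comp hbase) hne
  -- B limit
  have hBbase : Tendsto (fun t : ℝ => (q:ℂ) / (2 * (2 / (q:ℂ) + I * t))) (𝓝[>] (0:ℝ))
      (𝓝 ((q:ℂ)^2/4)) := by
    have hcont : Continuous (fun t : ℝ => 2 * (2 / (q:ℂ) + I * (t:ℂ))) := by continuity
    have hden : Tendsto (fun t : ℝ => 2 * (2 / (q:ℂ) + I * (t:ℂ))) (𝓝[>] (0:ℝ))
        (𝓝 (4 / (q:ℂ))) := by
      have h0 : 2 * (2 / (q:ℂ) + I * ((0:ℝ):ℂ)) = 4 / (q:ℂ) := by push_cast; field_simp; ring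
      have hct := hcont.continuousAt (x := (0:ℝ))
      rw [ContinuousAt, h0] at hct
      exact hct.mono_left nhdsWithin_le_nhds
    have h4q : (4:ℂ) / (q:ℂ) ≠ 0 := div_ne_zero (by norm_num) hq'
    have := tendsto_const_nhds.div hden h4q (f := fun _ : ℝ => (q:ℂ))
    have hval : (q:ℂ) / (4 / (q:ℂ)) = (q:ℂ)^2/4 := by field_simp
    rwa [hval] at this
  have hBslit : ((q:ℂ)^2/4) ∈ Complex.slitPlane := by
    rw [Complex.mem_slitPlane_iff]
    left
    have : ((q:ℂ)^2/4) = (((q:ℝ)^2/4 : ℝ) : ℂ) := by push_cast; ring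
    rw [this]
    simp only [Complex.ofReal_re]
    positivity
  have hBne : ((q:ℂ)^2/4) ^ (1/2 : ℂ) ≠ 0 := by
    have : ((q:ℂ)^2/4) ≠ 0 := div_ne_zero (pow_ne_zero 2 hq') (by norm_num)
    simp [Complex.cpow_eq_zero_iff, this]
  have hB : Tendsto (fun t : ℝ => 1 / ((q:ℂ) / (2 * (2 / (q:ℂ) + I * t))) ^ (1/2 : ℂ))
      (𝓝[>] (0:ℝ)) (𝓝 (1 / ((q:ℂ)^2/4) ^ (1/2 : ℂ))) :=
    tendsto_const_nhds.div
      ((continuousAt_cpow_const hBslit).tendsto.comp hBbase) hBne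
  -- C limit
  have hC : Tendsto (fun t : ℝ => jacobiTheta₂ 0 (2 * I * (2 / (q:ℂ) + I * t) / ((q:ℂ) * t)))
      (𝓝[>] (0:ℝ)) (𝓝 1) := by
    have hrate4 : Tendsto (fun t : ℝ => 4 * ((q:ℝ)^2 * t)⁻¹) (𝓝[>] (0:ℝ)) atTop :=
      (rate_tendsto q hq).const_mul_atTop (by norm_num)
    have hek : Tendsto (fun t : ℝ => evenKernel 0 (4 * ((q:ℝ)^2 * t)⁻¹) - 1) (𝓝[>] (0:ℝ))
        (𝓝 0) := by
      have := (evenKernel_tendsto.comp hrate4).sub_const 1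
      simpa using this
    have him : ∀ t : ℝ, 0 < t →
        (2 * I * (2 / (q:ℂ) + I * t) / ((q:ℂ) * t)) =
          ((-2 / (q:ℝ) : ℝ) : ℂ) + ((4 * ((q:ℝ)^2 * t)⁻¹ : ℝ) : ℂ) * I := by
      intro t ht
      have ht' : (t:ℂ) ≠ 0 := ofReal_ne_zero.mpr ht.ne'
      push_cast
      field_simp
      ring_nf
      linear_combination (2 * (q:ℂ) * (t:ℂ)) * Complex.I_sq
    have hsq : Tendsto (fun t : ℝ => jacobiTheta₂ 0 (2 * I * (2 / (q:ℂ) + I * t) / ((q:ℂ) * t)) - 1)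
        (𝓝[>] (0:ℝ)) (𝓝 0) := by
      apply squeeze_zero_norm' _ hek
      filter_upwards [self_mem_nhdsWithin] with t ht
      have ht : (0:ℝ) < t := ht
      have himt := him t ht
      have hpos : 0 < (2 * I * (2 / (q:ℂ) + I * t) / ((q:ℂ) * t)).im := by
        rw [himt]
        rw [show (((-2 / (q:ℝ) : ℝ) : ℂ) + ((4 * ((q:ℝ)^2 * t)⁻¹ : ℝ) : ℂ) * I).im
          = 4 * ((q:ℝ)^2 * t)⁻¹ by
            simp only [Complex.add_im, Complex.ofReal_im, Complex.mul_im, Complex.I_im,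
              Complex.I_re, Complex.ofReal_re, mul_one, mul_zero, add_zero, zero_add]]
        positivity
      have hbd := theta_sub_one_bound hpos
      rw [himt] at hbd ⊢
      refine hbd.trans (le_of_eq ?_)
      have himv : (((-2 / (q:ℝ) : ℝ) : ℂ) + ((4 * ((q:ℝ)^2 * t)⁻¹ : ℝ) : ℂ) * I).im
          = 4 * ((q:ℝ)^2 * t)⁻¹ := by
        simp only [Complex.add_im, Complex.ofReal_im, Complex.mul_im, Complex.I_im,
          Complex.I_re, Complex.ofReal_re, mul_one, mul_zero, add_zero, zero_add]
      rw [himv]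
    have := hsq.add_const 1
    simpa using this
  -- eventual equality
  have heq : ∀ᶠ t in 𝓝[>] (0:ℝ),
      ((Real.sqrt t : ℝ) : ℂ) * jacobiTheta₂ 0 (2 / q + I * t)
        = (1 / (-I * (2 / (q:ℂ) + I * t)) ^ (1/2 : ℂ))
          * (1 / ((q:ℂ) / (2 * (2 / (q:ℂ) + I * t))) ^ (1/2 : ℂ))
          * jacobiTheta₂ 0 (2 * I * (2 / (q:ℂ) + I * t) / ((q:ℂ) * t)) := by
    filter_upwards [self_mem_nhdsWithin] with t ht
    have ht : (0:ℝ) < t := ht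
    have ht' : (t:ℂ) ≠ 0 := ofReal_ne_zero.mpr ht.ne'
    set τ : ℂ := 2 / (q:ℂ) + I * t with hτdef
    clear_value τ
    have hτim : τ.im = t := by rw [hτdef]; simp
    have hτ0 : τ ≠ 0 := fun h => ht.ne' (by rw [← hτim, h, Complex.zero_im])
    have e1 : jacobiTheta₂ 0 τ = 1 / (-I * τ) ^ (1/2 : ℂ) * jacobiTheta₂ 0 (-1 / τ) := by
      have := jacobiTheta₂_functional_equation 0 τ
      simpa using this
    have h44 : ((q / 4 : ℕ) : ℂ) * 4 = (q:ℂ) := by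
      exact_mod_cast congrArg (Nat.cast : ℕ → ℂ) (Nat.div_mul_cancel (Nat.dvd_of_mod_eq_zero h4))
    have e2 : (-1 / τ) + 2 * ((q / 4 : ℕ) : ℂ) = I * q * t / (2 * τ) := by
      rw [eq_div_iff (mul_ne_zero two_ne_zero hτ0)]
      have expand : (-1/τ + 2*((q/4:ℕ):ℂ)) * (2*τ) = -2 + 4*((q/4:ℕ):ℂ)*τ := by
        field_simp
        ring
      rw [expand, hτdef]
      field_simp
      linear_combination (2:ℂ) * h44 + I*(t:ℂ)*(q:ℂ) * h44
    have e3 : jacobiTheta₂ 0 (-1 / τ) = jacobiTheta₂ 0 (I * q * t / (2 * τ)) := by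
      rw [← e2, theta_period]
    have hw0 : I * (q:ℂ) * t / (2 * τ) ≠ 0 :=
      div_ne_zero (mul_ne_zero (mul_ne_zero I_ne_zero hq') ht')
        (mul_ne_zero two_ne_zero hτ0)
    have e4 : jacobiTheta₂ 0 (I * q * t / (2 * τ))
        = 1 / (-I * (I * q * t / (2 * τ))) ^ (1/2 : ℂ)
          * jacobiTheta₂ 0 (-1 / (I * q * t / (2 * τ))) := by
      have := jacobiTheta₂_functional_equation 0 (I * q * t / (2 * τ))
      simpa using this
    have e5 : -1 / (I * (q:ℂ) * t / (2 * τ)) = 2 * I * τ / ((q:ℂ) * t) := by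
      rw [div_div_eq_mul_div, div_eq_div_iff (mul_ne_zero (mul_ne_zero I_ne_zero hq') ht')
        (mul_ne_zero hq' ht')]
      linear_combination (-2 * τ * (q:ℂ) * (t:ℂ)) * Complex.I_sq
    have e6 : -I * (I * (q:ℂ) * t / (2 * τ)) = (t:ℂ) * ((q:ℂ) / (2 * τ)) := by
      field_simp
      linear_combination (-1:ℂ) * Complex.I_sq
    have hqτ : (q:ℂ) / (2 * τ) ≠ 0 := div_ne_zero hq' (mul_ne_zero two_ne_zero hτ0)
    have e7 : ((t:ℂ) * ((q:ℂ) / (2 * τ))) ^ (1/2 : ℂ)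
        = ((Real.sqrt t : ℝ) : ℂ) * ((q:ℂ) / (2 * τ)) ^ (1/2 : ℂ) := by
      rw [ofReal_mul_cpow ht hqτ]
      congr 1
      rw [Real.sqrt_eq_rpow, Complex.ofReal_cpow ht.le]
      norm_num
    have hst : ((Real.sqrt t : ℝ) : ℂ) ≠ 0 := by
      simp [Real.sqrt_ne_zero', ht]
    have hcne : ((q:ℂ) / (2 * τ)) ^ (1/2 : ℂ) ≠ 0 := by
      simp [Complex.cpow_eq_zero_iff, hqτ]
    rw [e1, e3, e4, e5, e6, e7]
    field_simp
  refine Tendsto.congr' (heq.mono fun t h => h.symm) ?_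
  have := (hA.mul hB).mul hC
  simpa using this

end GaussSumAux


open GaussSumAux in
theorem gauss_sum_zero_mod_four (q : ℕ) (hq : 0 < q) (h4 : q % 4 = 0) :
    ∑ b ∈ Finset.range q, Complex.exp (2 * Real.pi * I * (b : ℂ) ^ 2 / q)
      = (1 + I) * (Real.sqrt q : ℂ) := by
  have hq' : (q:ℂ) ≠ 0 := Nat.cast_ne_zero.mpr hq.ne'
  have hqr : (0:ℝ) < (q:ℝ) := Nat.cast_pos.mpr hq
  have huniq := tendsto_nhds_unique (way1 q hq) (way2 q hq h4)
  -- value of ((q:ℂ)^2/4) ^ (1/2)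
  have hv2 : ((q:ℂ)^2/4) ^ (1/2 : ℂ) = (((q:ℝ)/2 : ℝ) : ℂ) := by
    rw [show ((q:ℂ)^2/4) = ((((q:ℝ)^2/4) : ℝ) : ℂ) by push_cast; ring,
      show (1/2 : ℂ) = (((1/2 : ℝ) : ℝ) : ℂ) by norm_num,
      ← Complex.ofReal_cpow (by positivity), ← Real.sqrt_eq_rpow,
      show (q:ℝ)^2/4 = ((q:ℝ)/2)^2 by ring, Real.sqrt_sq (by positivity)]
  -- value of (-I) ^ (1/2)
  have hvI : (-I) ^ (1/2 : ℂ) = (((Real.sqrt 2/2 : ℝ)) : ℂ) * (1 - I) := by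
    rw [Complex.cpow_def_of_ne_zero (neg_ne_zero.mpr I_ne_zero), Complex.log_neg_I,
      show (-(↑π / 2) * I) * (1/2 : ℂ) = ((-(π/4) : ℝ) : ℂ) * I by push_cast; ring,
      Complex.exp_mul_I, ← Complex.ofReal_cos, ← Complex.ofReal_sin,
      Real.cos_neg, Real.sin_neg, Real.cos_pi_div_four, Real.sin_pi_div_four]
    push_cast
    ring
  have hv1 : ((-2) * I / (q:ℂ)) ^ (1/2 : ℂ)
      = (((Real.sqrt (2/q) : ℝ)) : ℂ) * ((((Real.sqrt 2/2 : ℝ)) : ℂ) * (1 - I)) := by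
    rw [show ((-2) * I / (q:ℂ)) = (((2/(q:ℝ) : ℝ)) : ℂ) * (-I) by push_cast; field_simp,
      ofReal_mul_cpow (by positivity) (neg_ne_zero.mpr I_ne_zero), hvI]
    congr 2
    rw [show (1/2 : ℂ) = (((1/2 : ℝ) : ℝ) : ℂ) by norm_num,
      ← Complex.ofReal_cpow (by positivity), ← Real.sqrt_eq_rpow]
  -- combine square roots
  have hsr : Real.sqrt (2/q) * (Real.sqrt 2/2) = 1 / Real.sqrt q := by
    rw [Real.sqrt_div (by norm_num : (0:ℝ) ≤ 2)]
    have h2 : Real.sqrt 2 * Real.sqrt 2 = 2 := Real.mul_self_sqrt (by norm_num)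
    have hsq : 0 < Real.sqrt q := Real.sqrt_pos.mpr hqr
    field_simp
    linarith [h2]
  rw [hv1, hv2] at huniq
  have hs : ((Real.sqrt q : ℝ) : ℂ) * ((Real.sqrt q : ℝ) : ℂ) = (q:ℂ) := by
    norm_cast
    exact Real.mul_self_sqrt hqr.le
  have hsC : (((Real.sqrt (2/q) : ℝ)) : ℂ) * (((Real.sqrt 2/2 : ℝ)) : ℂ)
      = 1 / ((Real.sqrt q : ℝ) : ℂ) := by
    rw [← Complex.ofReal_mul, hsr]
    push_cast
    ring
  have hsqC : ((Real.sqrt q : ℝ) : ℂ) ≠ 0 := by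
    simpa using (Real.sqrt_pos.mpr hqr).ne'
  have h1I : (1 - I) ≠ 0 := by
    intro h
    have := congrArg Complex.im h
    simp at this
  have hIm : (1 - I) * (1 + I) = 2 := by
    linear_combination -Complex.I_sq
  rw [show (((Real.sqrt (2/q) : ℝ)) : ℂ) * ((((Real.sqrt 2/2 : ℝ)) : ℂ) * (1 - I))
    = ((((Real.sqrt (2/q) : ℝ)) : ℂ) * (((Real.sqrt 2/2 : ℝ)) : ℂ)) * (1 - I) by ring,
    hsC] at huniq
  push_cast at huniq
  field_simp at huniq
  have hcancel : (2*(q:ℂ)) * (∑ b ∈ Finset.range q, Complex.exp (2 * Real.pi * I * (b : ℂ) ^ 2 / q))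
      = (2*(q:ℂ)) * ((1 + I) * ((Real.sqrt q : ℝ) : ℂ)) := by
    linear_combination ((q:ℂ)*(1+I)) * huniq
      + (-(q:ℂ) * (∑ b ∈ Finset.range q, Complex.exp (2 * Real.pi * I * (b : ℂ) ^ 2 / q))) * hIm
  exact mul_left_cancel₀ (by simpa using hq.ne') hcancel

end
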